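/- arXiv:1608.07164 — 2 statements merged into one kernel-verified Lean document; each statement's English description precedes it below -/
import Mathlib

section
/- The Petersen graph is hypohamiltonian: it has no Hamiltonian cycle, but for every vertex v, deleting v yields a graph with a Hamiltonian cycle. -/
/-- The Petersen graph, as the Kneser graph `K(5,2)`: vertices are the 2-element
subsets of a 5-element set, adjacent iff disjoint. -/
def petersen : SimpleGraph {s : Finset (Fin 5) // s.card = 2} where
  Adj u v := Disjoint u.1 v.1
  symm := ⟨fun u v h => h.symm⟩
  loopless := ⟨fun u h => by
    have h2 := u.2
    rw [disjoint_self.mp h] at h2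
    simp at h2⟩

abbrev PV := {s : Finset (Fin 5) // s.card = 2}

instance : DecidableRel petersen.Adj := fun u v => inferInstanceAs (Decidable (Disjoint u.1 v.1))

instance (v : PV) : DecidableRel ((petersen.induce {u | u ≠ v}).Adj) :=
  fun a b => inferInstanceAs (Decidable (Disjoint a.1.1 b.1.1))

/-- DFS search for a hamiltonian cycle extension. -/
def ext (v0 : PV) : ℕ → List PV → Bool
  | 0, [] => false
  | 0, c :: t => decide (petersen.Adj c v0 ∧ ∀ x : PV, x ∈ c :: t)
  | _+1, [] => false
  | n+1, c :: t =>
      decide (∃ x : PV, petersen.Adj c x ∧ x ∉ c :: t ∧ ext v0 n (x :: c :: t) = true)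

lemma ext_sound (v0 : PV) : ∀ (m : List PV) (c : PV) (t : List PV),
    List.Chain' petersen.Adj ((c :: t).reverse ++ m) →
    ((c :: t).reverse ++ m).Nodup →
    petersen.Adj (((c :: t).reverse ++ m).getLast (by simp)) v0 →
    (∀ x : PV, x ∈ (c :: t).reverse ++ m) →
    ext v0 m.length (c :: t) = true
  | [], c, t, hch, hnd, hlast, hcov => by
      simp only [List.append_nil] at hlast hcov
      rw [List.getLast_reverse] at hlast
      simp only [List.length_nil, ext, decide_eq_true_eq]
      exact ⟨hlast, fun x => List.mem_reverse.mp (hcov x)⟩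
  | x :: m', c, t, hch, hnd, hlast, hcov => by
      have key : (x :: c :: t).reverse ++ m' = (c :: t).reverse ++ (x :: m') := by simp
      have hadj : petersen.Adj c x := by
        obtain ⟨-, -, hj⟩ := List.isChain_append.mp hch
        exact hj c (by simp) x rfl
      have hxt : x ∉ c :: t := by
        intro hx
        exact List.disjoint_of_nodup_append hnd (List.mem_reverse.mpr hx)
          (List.mem_cons_self (a := x) (l := m'))
      have ih := ext_sound v0 m' x (c :: t) (by rw [key]; exact hch)
        (by rw [key]; exact hnd) (by simp only [key]; exact hlast) (by simp only [key]; exact hcov)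
      simp only [List.length_cons, ext, decide_eq_true_eq]
      exact ⟨x, hadj, hxt, ih⟩

set_option maxRecDepth 20000 in
lemma petersen_not_ham : ¬ petersen.IsHamiltonian := by
  intro h
  obtain ⟨a, p, hp⟩ := h (by decide)
  have hcard : Fintype.card PV = 10 := by decide
  have hlen : p.length = 10 := by rw [hp.length_eq, hcard]
  have hsup : p.support.length = 11 := by rw [SimpleGraph.Walk.length_support, hlen]
  have ht_ne : p.support.tail ≠ [] := by
    intro hnil
    rw [p.support_eq_cons, hnil] at hsup
    simp at hsup
  have hlast : p.support.tail.getLast ht_ne = a := by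
    rw [List.getLast_tail]
    exact p.getLast_support
  have hdecomp : p.support.tail = p.support.tail.dropLast ++ [a] := by
    conv_lhs => rw [← List.dropLast_append_getLast ht_ne]
    rw [hlast]
  set mid := p.support.tail.dropLast with hmid
  have hfull : p.support = (a :: mid) ++ [a] := by
    rw [p.support_eq_cons, hdecomp]; simp
  have hmidlen : mid.length = 9 := by
    rw [hfull] at hsup; simp at hsup; omega
  have hch : List.Chain' petersen.Adj ((a :: mid) ++ [a]) := by
    rw [← hfull]; exact p.isChain_adj_support
  obtain ⟨hch1, -, hj⟩ := List.isChain_append.mp hch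
  have hnd : (a :: mid).Nodup := by
    have := hp.isCycle.2
    rw [hdecomp, List.nodup_append] at this
    refine List.nodup_cons.mpr ⟨fun ha => this.2.2 a ha a (by simp) rfl, this.1⟩
  have hlast2 : petersen.Adj ((a :: mid).getLast (by simp)) a := by
    apply hj _ _ a rfl
    rw [List.getLast?_eq_getLast (by simp)]
    exact rfl
  have hcov : ∀ x : PV, x ∈ (a :: mid) := by
    intro x
    have := hp.mem_support x
    rw [hfull, List.mem_append] at this
    rcases this with h1 | h1
    · exact h1
    · simp at h1; simp [h1]
  have hext := ext_sound a mid a [] (by exact hch1) (by exact hnd)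
    (by exact hlast2) (by exact hcov)
  rw [hmidlen] at hext
  have hfalse : ∀ v0 : PV, ext v0 9 [v0] = false := by decide
  rw [hfalse a] at hext
  simp at hext

def pv (a b : Fin 5) (h : ({a,b} : Finset (Fin 5)).card = 2 := by decide) : PV := ⟨{a,b}, h⟩

def iv (v : PV) (a b : Fin 5) (h1 : ({a,b} : Finset (Fin 5)).card = 2 := by decide)
    (h2 : (⟨{a,b}, h1⟩ : PV) ≠ v := by decide) : {u : PV // u ∈ {u | u ≠ v}} :=
  ⟨⟨{a,b}, h1⟩, h2⟩

/-- Boolean check that a list is a chain of adjacent vertices. -/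
def adjChain {V : Type*} (G : SimpleGraph V) [DecidableRel G.Adj] : V → List V → Bool
  | _, [] => true
  | a, b :: l => decide (G.Adj a b) && adjChain G b l

/-- Build a walk from a list of vertices. -/
def mkW {V : Type*} {G : SimpleGraph V} [DecidableRel G.Adj] :
    (a b : V) → (l : List V) → adjChain G a (l ++ [b]) = true → G.Walk a b
  | _, _, [], h =>
      SimpleGraph.Walk.cons (of_decide_eq_true ((Bool.and_eq_true _ _).mp h).1)
        SimpleGraph.Walk.nil
  | _, b, x :: t, h =>
      SimpleGraph.Walk.cons (of_decide_eq_true ((Bool.and_eq_true _ _).mp h).1)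
        (mkW x b t ((Bool.and_eq_true _ _).mp h).2)

lemma case01 : (petersen.induce {u | u ≠ pv 0 1}).IsHamiltonian := by
  intro _
  refine ⟨iv _ 0 2, mkW _ _ [iv _ 1 3, iv _ 2 4, iv _ 0 3, iv _ 1 4, iv _ 2 3, iv _ 0 4, iv _ 1 2, iv _ 3 4] (by decide), ?_⟩
  rw [SimpleGraph.Walk.isHamiltonianCycle_iff_isCycle_and_support_count_tail_eq_one,
      SimpleGraph.Walk.isCycle_def, SimpleGraph.Walk.isTrail_def]
  refine ⟨⟨by decide, ?_, by decide⟩, by decide⟩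
  simp [mkW]

lemma case02 : (petersen.induce {u | u ≠ pv 0 2}).IsHamiltonian := by
  intro _
  refine ⟨iv _ 0 1, mkW _ _ [iv _ 2 3, iv _ 1 4, iv _ 0 3, iv _ 2 4, iv _ 1 3, iv _ 0 4, iv _ 1 2, iv _ 3 4] (by decide), ?_⟩
  rw [SimpleGraph.Walk.isHamiltonianCycle_iff_isCycle_and_support_count_tail_eq_one,
      SimpleGraph.Walk.isCycle_def, SimpleGraph.Walk.isTrail_def]
  refine ⟨⟨by decide, ?_, by decide⟩, by decide⟩
  simp [mkW]

lemma case03 : (petersen.induce {u | u ≠ pv 0 3}).IsHamiltonian := by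
  intro _
  refine ⟨iv _ 0 1, mkW _ _ [iv _ 2 3, iv _ 1 4, iv _ 0 2, iv _ 3 4, iv _ 1 2, iv _ 0 4, iv _ 1 3, iv _ 2 4] (by decide), ?_⟩
  rw [SimpleGraph.Walk.isHamiltonianCycle_iff_isCycle_and_support_count_tail_eq_one,
      SimpleGraph.Walk.isCycle_def, SimpleGraph.Walk.isTrail_def]
  refine ⟨⟨by decide, ?_, by decide⟩, by decide⟩
  simp [mkW]

lemma case04 : (petersen.induce {u | u ≠ pv 0 4}).IsHamiltonian := by
  intro _
  refine ⟨iv _ 0 1, mkW _ _ [iv _ 2 3, iv _ 1 4, iv _ 0 2, iv _ 1 3, iv _ 2 4, iv _ 0 3, iv _ 1 2, iv _ 3 4] (by decide), ?_⟩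
  rw [SimpleGraph.Walk.isHamiltonianCycle_iff_isCycle_and_support_count_tail_eq_one,
      SimpleGraph.Walk.isCycle_def, SimpleGraph.Walk.isTrail_def]
  refine ⟨⟨by decide, ?_, by decide⟩, by decide⟩
  simp [mkW]

lemma case12 : (petersen.induce {u | u ≠ pv 1 2}).IsHamiltonian := by
  intro _
  refine ⟨iv _ 0 1, mkW _ _ [iv _ 2 3, iv _ 0 4, iv _ 1 3, iv _ 2 4, iv _ 0 3, iv _ 1 4, iv _ 0 2, iv _ 3 4] (by decide), ?_⟩
  rw [SimpleGraph.Walk.isHamiltonianCycle_iff_isCycle_and_support_count_tail_eq_one,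
      SimpleGraph.Walk.isCycle_def, SimpleGraph.Walk.isTrail_def]
  refine ⟨⟨by decide, ?_, by decide⟩, by decide⟩
  simp [mkW]

lemma case13 : (petersen.induce {u | u ≠ pv 1 3}).IsHamiltonian := by
  intro _
  refine ⟨iv _ 0 1, mkW _ _ [iv _ 2 3, iv _ 0 4, iv _ 1 2, iv _ 3 4, iv _ 0 2, iv _ 1 4, iv _ 0 3, iv _ 2 4] (by decide), ?_⟩
  rw [SimpleGraph.Walk.isHamiltonianCycle_iff_isCycle_and_support_count_tail_eq_one,
      SimpleGraph.Walk.isCycle_def, SimpleGraph.Walk.isTrail_def]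
  refine ⟨⟨by decide, ?_, by decide⟩, by decide⟩
  simp [mkW]

lemma case14 : (petersen.induce {u | u ≠ pv 1 4}).IsHamiltonian := by
  intro _
  refine ⟨iv _ 0 1, mkW _ _ [iv _ 2 3, iv _ 0 4, iv _ 1 2, iv _ 0 3, iv _ 2 4, iv _ 1 3, iv _ 0 2, iv _ 3 4] (by decide), ?_⟩
  rw [SimpleGraph.Walk.isHamiltonianCycle_iff_isCycle_and_support_count_tail_eq_one,
      SimpleGraph.Walk.isCycle_def, SimpleGraph.Walk.isTrail_def]
  refine ⟨⟨by decide, ?_, by decide⟩, by decide⟩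
  simp [mkW]

lemma case23 : (petersen.induce {u | u ≠ pv 2 3}).IsHamiltonian := by
  intro _
  refine ⟨iv _ 0 1, mkW _ _ [iv _ 2 4, iv _ 0 3, iv _ 1 4, iv _ 0 2, iv _ 1 3, iv _ 0 4, iv _ 1 2, iv _ 3 4] (by decide), ?_⟩
  rw [SimpleGraph.Walk.isHamiltonianCycle_iff_isCycle_and_support_count_tail_eq_one,
      SimpleGraph.Walk.isCycle_def, SimpleGraph.Walk.isTrail_def]
  refine ⟨⟨by decide, ?_, by decide⟩, by decide⟩
  simp [mkW]

lemma case24 : (petersen.induce {u | u ≠ pv 2 4}).IsHamiltonian := by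
  intro _
  refine ⟨iv _ 0 1, mkW _ _ [iv _ 2 3, iv _ 0 4, iv _ 1 3, iv _ 0 2, iv _ 1 4, iv _ 0 3, iv _ 1 2, iv _ 3 4] (by decide), ?_⟩
  rw [SimpleGraph.Walk.isHamiltonianCycle_iff_isCycle_and_support_count_tail_eq_one,
      SimpleGraph.Walk.isCycle_def, SimpleGraph.Walk.isTrail_def]
  refine ⟨⟨by decide, ?_, by decide⟩, by decide⟩
  simp [mkW]

lemma case34 : (petersen.induce {u | u ≠ pv 3 4}).IsHamiltonian := by
  intro _
  refine ⟨iv _ 0 1, mkW _ _ [iv _ 2 3, iv _ 0 4, iv _ 1 2, iv _ 0 3, iv _ 1 4, iv _ 0 2, iv _ 1 3, iv _ 2 4] (by decide), ?_⟩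
  rw [SimpleGraph.Walk.isHamiltonianCycle_iff_isCycle_and_support_count_tail_eq_one,
      SimpleGraph.Walk.isCycle_def, SimpleGraph.Walk.isTrail_def]
  refine ⟨⟨by decide, ?_, by decide⟩, by decide⟩
  simp [mkW]

/-- The Petersen graph is hypohamiltonian: it has no Hamiltonian cycle, but
deleting any vertex yields a Hamiltonian graph. -/
theorem petersen_hypohamiltonian :
    ¬ petersen.IsHamiltonian ∧
      ∀ v, (petersen.induce {u | u ≠ v}).IsHamiltonian := by
  refine ⟨petersen_not_ham, fun v => ?_⟩
  have hcases : v = pv 0 1 ∨ v = pv 0 2 ∨ v = pv 0 3 ∨ v = pv 0 4 ∨ v = pv 1 2 ∨ v = pv 1 3 ∨ v = pv 1 4 ∨ v = pv 2 3 ∨ v = pv 2 4 ∨ v = pv 3 4 := by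
    revert v; decide
  rcases hcases with rfl|rfl|rfl|rfl|rfl|rfl|rfl|rfl|rfl|rfl
  · exact case01
  · exact case02
  · exact case03
  · exact case04
  · exact case12
  · exact case13
  · exact case14
  · exact case23
  · exact case24
  · exact case34
end

section
/- The Petersen graph has chromatic index 4, i.e., its edges cannot be properly coloured with 3 colours but can be properly coloured with 4 colours. -/
/-- A proper edge colouring with colour set `α`: edges sharing a vertex get
distinct colours. -/
def ProperEdgeColouring {V : Type*} (G : SimpleGraph V) {α : Type*}
    (c : G.edgeSet → α) : Prop :=
  ∀ e f : G.edgeSet, e ≠ f → (∃ v, v ∈ (e : Sym2 V) ∧ v ∈ (f : Sym2 V)) → c e ≠ c f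

def v01 : {s : Finset (Fin 5) // s.card = 2} := ⟨{0,1}, by decide⟩
def v02 : {s : Finset (Fin 5) // s.card = 2} := ⟨{0,2}, by decide⟩
def v03 : {s : Finset (Fin 5) // s.card = 2} := ⟨{0,3}, by decide⟩
def v04 : {s : Finset (Fin 5) // s.card = 2} := ⟨{0,4}, by decide⟩
def v12 : {s : Finset (Fin 5) // s.card = 2} := ⟨{1,2}, by decide⟩
def v13 : {s : Finset (Fin 5) // s.card = 2} := ⟨{1,3}, by decide⟩
def v14 : {s : Finset (Fin 5) // s.card = 2} := ⟨{1,4}, by decide⟩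
def v23 : {s : Finset (Fin 5) // s.card = 2} := ⟨{2,3}, by decide⟩
def v24 : {s : Finset (Fin 5) // s.card = 2} := ⟨{2,4}, by decide⟩
def v34 : {s : Finset (Fin 5) // s.card = 2} := ⟨{3,4}, by decide⟩

def pe0 : petersen.edgeSet := ⟨s(v01,v23), by decide⟩
def pe1 : petersen.edgeSet := ⟨s(v01,v24), by decide⟩
def pe2 : petersen.edgeSet := ⟨s(v01,v34), by decide⟩
def pe3 : petersen.edgeSet := ⟨s(v02,v13), by decide⟩
def pe4 : petersen.edgeSet := ⟨s(v02,v14), by decide⟩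
def pe5 : petersen.edgeSet := ⟨s(v02,v34), by decide⟩
def pe6 : petersen.edgeSet := ⟨s(v03,v12), by decide⟩
def pe7 : petersen.edgeSet := ⟨s(v03,v14), by decide⟩
def pe8 : petersen.edgeSet := ⟨s(v03,v24), by decide⟩
def pe9 : petersen.edgeSet := ⟨s(v04,v12), by decide⟩
def pe10 : petersen.edgeSet := ⟨s(v04,v13), by decide⟩
def pe11 : petersen.edgeSet := ⟨s(v04,v23), by decide⟩
def pe12 : petersen.edgeSet := ⟨s(v12,v34), by decide⟩
def pe13 : petersen.edgeSet := ⟨s(v13,v24), by decide⟩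
def pe14 : petersen.edgeSet := ⟨s(v14,v23), by decide⟩

set_option synthInstance.maxSize 2000 in
set_option maxHeartbeats 1000000 in
theorem key3 : ∀ a0 : Fin 3, ∀ a1 : Fin 3, a0 ≠ a1 → ∀ a2 : Fin 3, a0 ≠ a2 → a1 ≠ a2 → ∀ a3 : Fin 3, ∀ a4 : Fin 3, a3 ≠ a4 → ∀ a5 : Fin 3, a2 ≠ a5 → a3 ≠ a5 → a4 ≠ a5 → ∀ a6 : Fin 3, ∀ a7 : Fin 3, a4 ≠ a7 → a6 ≠ a7 → ∀ a8 : Fin 3, a1 ≠ a8 → a6 ≠ a8 → a7 ≠ a8 → ∀ a9 : Fin 3, a6 ≠ a9 → ∀ a10 : Fin 3, a3 ≠ a10 → a9 ≠ a10 → ∀ a11 : Fin 3, a0 ≠ a11 → a9 ≠ a11 → a10 ≠ a11 → ∀ a12 : Fin 3, a2 ≠ a12 → a5 ≠ a12 → a6 ≠ a12 → a9 ≠ a12 → ∀ a13 : Fin 3, a1 ≠ a13 → a3 ≠ a13 → a8 ≠ a13 → a10 ≠ a13 → ∀ a14 : Fin 3, a0 ≠ a14 → a4 ≠ a14 → a7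 ≠ a14 → a11 ≠ a14 → False := by decide

def gcol (s t : Finset (Fin 5)) : Fin 4 :=
  if (s = ({0,1} : Finset (Fin 5)) ∧ t = ({2,3} : Finset (Fin 5))) ∨ (s = ({2,3} : Finset (Fin 5)) ∧ t = ({0,1} : Finset (Fin 5))) then 0 else
  if (s = ({0,1} : Finset (Fin 5)) ∧ t = ({2,4} : Finset (Fin 5))) ∨ (s = ({2,4} : Finset (Fin 5)) ∧ t = ({0,1} : Finset (Fin 5))) then 1 else
  if (s = ({0,1} : Finset (Fin 5)) ∧ t = ({3,4} : Finset (Fin 5))) ∨ (s = ({3,4} : Finset (Fin 5)) ∧ t = ({0,1} : Finset (Fin 5))) then 2 else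
  if (s = ({0,2} : Finset (Fin 5)) ∧ t = ({1,3} : Finset (Fin 5))) ∨ (s = ({1,3} : Finset (Fin 5)) ∧ t = ({0,2} : Finset (Fin 5))) then 0 else
  if (s = ({0,2} : Finset (Fin 5)) ∧ t = ({1,4} : Finset (Fin 5))) ∨ (s = ({1,4} : Finset (Fin 5)) ∧ t = ({0,2} : Finset (Fin 5))) then 1 else
  if (s = ({0,2} : Finset (Fin 5)) ∧ t = ({3,4} : Finset (Fin 5))) ∨ (s = ({3,4} : Finset (Fin 5)) ∧ t = ({0,2} : Finset (Fin 5))) then 3 else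
  if (s = ({0,3} : Finset (Fin 5)) ∧ t = ({1,2} : Finset (Fin 5))) ∨ (s = ({1,2} : Finset (Fin 5)) ∧ t = ({0,3} : Finset (Fin 5))) then 0 else
  if (s = ({0,3} : Finset (Fin 5)) ∧ t = ({1,4} : Finset (Fin 5))) ∨ (s = ({1,4} : Finset (Fin 5)) ∧ t = ({0,3} : Finset (Fin 5))) then 2 else
  if (s = ({0,3} : Finset (Fin 5)) ∧ t = ({2,4} : Finset (Fin 5))) ∨ (s = ({2,4} : Finset (Fin 5)) ∧ t = ({0,3} : Finset (Fin 5))) then 3 else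
  if (s = ({0,4} : Finset (Fin 5)) ∧ t = ({1,2} : Finset (Fin 5))) ∨ (s = ({1,2} : Finset (Fin 5)) ∧ t = ({0,4} : Finset (Fin 5))) then 2 else
  if (s = ({0,4} : Finset (Fin 5)) ∧ t = ({1,3} : Finset (Fin 5))) ∨ (s = ({1,3} : Finset (Fin 5)) ∧ t = ({0,4} : Finset (Fin 5))) then 3 else
  if (s = ({0,4} : Finset (Fin 5)) ∧ t = ({2,3} : Finset (Fin 5))) ∨ (s = ({2,3} : Finset (Fin 5)) ∧ t = ({0,4} : Finset (Fin 5))) then 1 else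
  if (s = ({1,2} : Finset (Fin 5)) ∧ t = ({3,4} : Finset (Fin 5))) ∨ (s = ({3,4} : Finset (Fin 5)) ∧ t = ({1,2} : Finset (Fin 5))) then 1 else
  if (s = ({1,3} : Finset (Fin 5)) ∧ t = ({2,4} : Finset (Fin 5))) ∨ (s = ({2,4} : Finset (Fin 5)) ∧ t = ({1,3} : Finset (Fin 5))) then 2 else
  if (s = ({1,4} : Finset (Fin 5)) ∧ t = ({2,3} : Finset (Fin 5))) ∨ (s = ({2,3} : Finset (Fin 5)) ∧ t = ({1,4} : Finset (Fin 5))) then 3 else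
  0

def c4 : petersen.edgeSet → Fin 4 := fun e =>
  Sym2.lift ⟨fun u v => gcol u.1 v.1, by
    intro u v
    rcases u with ⟨u, _⟩; rcases v with ⟨v, _⟩
    simp only [gcol]
    revert u v; decide⟩ e.1

set_option synthInstance.maxSize 2000 in
set_option maxHeartbeats 4000000 in
set_option maxRecDepth 4000 in
/-- The Petersen graph has chromatic index 4: its edges cannot be properly
coloured with 3 colours, but can be with 4 colours. -/
theorem petersen_chromaticIndex_four :
    (¬ ∃ c : petersen.edgeSet → Fin 3, ProperEdgeColouring petersen c) ∧
      (∃ c : petersen.edgeSet → Fin 4, ProperEdgeColouring petersen c) := by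
  constructor
  · rintro ⟨c, hc⟩
    exact key3 (c pe0) (c pe1) (hc pe0 pe1 (by decide) ⟨v01, by decide, by decide⟩) (c pe2) (hc pe0 pe2 (by decide) ⟨v01, by decide, by decide⟩) (hc pe1 pe2 (by decide) ⟨v01, by decide, by decide⟩) (c pe3) (c pe4) (hc pe3 pe4 (by decide) ⟨v02, by decide, by decide⟩) (c pe5) (hc pe2 pe5 (by decide) ⟨v34, by decide, by decide⟩) (hc pe3 pe5 (by decide) ⟨v02, by decide, by decide⟩) (hc pe4 pe5 (by decide) ⟨v02, by decide, by decide⟩) (c pe6) (c pe7) (hc pe4 pe7 (by decide) ⟨v14, by decide, by decide⟩) (hc pe6 pe7 (by decide) ⟨v03, by decide, by decide⟩) (c pe8) (hc pe1 pe8 (by decide) ⟨v24, by decide, by decide⟩) (hc pe6 pe8 (by decide) ⟨v03, by decide, by decide⟩) (hc pe7 pe8 (by decide) ⟨v03, by decide, by decide⟩) (c pe9) (hc pe6 pe9 (by decide) ⟨v12, by decide, by decide⟩) (c pe10) (hc pe3 pe10 (by decide) ⟨v13, by decide, by decide⟩) (hc pe9 pe10 (by decide) ⟨v04, by decide, by decide⟩)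 (c pe11) (hc pe0 pe11 (by decide) ⟨v23, by decide, by decide⟩) (hc pe9 pe11 (by decide) ⟨v04, by decide, by decide⟩) (hc pe10 pe11 (by decide) ⟨v04, by decide, by decide⟩) (c pe12) (hc pe2 pe12 (by decide) ⟨v34, by decide, by decide⟩) (hc pe5 pe12 (by decide) ⟨v34, by decide, by decide⟩) (hc pe6 pe12 (by decide) ⟨v12, by decide, by decide⟩) (hc pe9 pe12 (by decide) ⟨v12, by decide, by decide⟩) (c pe13) (hc pe1 pe13 (by decide) ⟨v24, by decide, by decide⟩) (hc pe3 pe13 (by decide) ⟨v13, by decide, by decide⟩) (hc pe8 pe13 (by decide) ⟨v24, by decide, by decide⟩) (hc pe10 pe13 (by decide) ⟨v13, by decide, by decide⟩) (c pe14) (hc pe0 pe14 (by decide) ⟨v23, by decide, by decide⟩) (hc pe4 pe14 (by decide) ⟨v14, by decide, by decide⟩) (hc pe7 pe14 (by decide) ⟨v14, by decide, by decide⟩) (hc pe11 pe14 (by decide) ⟨v23, by decide, by decide⟩)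
  · refine ⟨c4, ?_⟩
    unfold ProperEdgeColouring
    decide
end
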